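/- A graph G is square-stable if and only if there exists a maximum stable set S₀ of G such that every stable set A of G disjoint from S₀ can be uniquely matched into S₀, i.e., there is a unique matching M ⊆ (A, S₀) saturating all vertices of A. -/

import Mathlib

open SimpleGraph

attribute [local instance] Classical.propDecidable

variable {V : Type*}

/-- A stable (independent) set: pairwise non-adjacent vertices. -/
def IsStable (G : SimpleGraph V) (S : Finset V) : Prop :=
  ∀ ⦃a⦄, a ∈ S → ∀ ⦃b⦄, b ∈ S → ¬ G.Adj a b

/-- The stability (independence) number α(G). -/
noncomputable def alpha [Fintype V] (G : SimpleGraph V) : ℕ :=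
  (Finset.univ.powerset.filter (fun S => IsStable G S)).sup Finset.card

/-- A maximum stable set, i.e. a member of Ω(G). -/
def IsMaxStable [Fintype V] (G : SimpleGraph V) (S : Finset V) : Prop :=
  IsStable G S ∧ S.card = alpha G

/-- The square G² of a graph: distinct vertices adjacent iff at distance ≤ 2. -/
def square (G : SimpleGraph V) : SimpleGraph V where
  Adj u v := u ≠ v ∧ (G.Adj u v ∨ ∃ w, G.Adj u w ∧ G.Adj w v)
  symm := by
    constructor
    rintro u v ⟨h, h2⟩
    refine ⟨h.symm, ?_⟩
    rcases h2 with h2 | ⟨w, hw1, hw2⟩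
    · exact Or.inl h2.symm
    · exact Or.inr ⟨w, hw2.symm, hw1.symm⟩
  loopless := by constructor; rintro u ⟨h, _⟩; exact h rfl

/-- G is α-square-stable if α(G) = α(G²). -/
def SquareStable [Fintype V] (G : SimpleGraph V) : Prop :=
  alpha G = alpha (square G)

/-- The maximum matching size μ(G). -/
noncomputable def mu [Fintype V] (G : SimpleGraph V) : ℕ :=
  sSup {n | ∃ M : G.Subgraph, M.IsMatching ∧ M.verts.ncard = 2 * n}

/-- f realizes a matching of A into S: it sends each a ∈ A to a distinct
neighbour in S (so the corresponding edges form a matching ⊆ (A,S) saturating A). -/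
def MatchedInto (G : SimpleGraph V) (A S : Finset V) (f : V → V) : Prop :=
  (∀ a ∈ A, f a ∈ S ∧ G.Adj a (f a)) ∧ ∀ a ∈ A, ∀ b ∈ A, f a = f b → a = b

/-- Well-covered: no isolated vertices, and every maximal stable set is maximum. -/
def WellCovered [Fintype V] (G : SimpleGraph V) : Prop :=
  (∀ v : V, ∃ w, G.Adj v w) ∧
    ∀ S : Finset V, IsStable G S → (∀ T : Finset V, IsStable G T → S ⊆ T → S = T) →
      S.card = alpha G

/-- Very well-covered: well-covered and |V(G)| = 2α(G). -/
def VeryWellCovered [Fintype V] (G : SimpleGraph V) : Prop :=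
  WellCovered G ∧ Fintype.card V = 2 * alpha G

/-- The set of pendant (degree-one) vertices of G. -/
noncomputable def pendants [Fintype V] (G : SimpleGraph V) : Finset V :=
  Finset.univ.filter (fun v => G.degree v = 1)

/-- G has a perfect matching consisting of pendant edges. -/
def HasPendantPerfectMatching [Fintype V] (G : SimpleGraph V) : Prop :=
  ∃ M : G.Subgraph, M.IsPerfectMatching ∧
    ∀ a b : V, M.Adj a b → G.degree a = 1 ∨ G.degree b = 1

/-- The star K_{1,n}: vertex 0 is the center, adjacent to n leaves. -/
def starGraph (n : ℕ) : SimpleGraph (Fin (n + 1)) where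
  Adj u v := u ≠ v ∧ (u = 0 ∨ v = 0)
  symm := by constructor; rintro u v ⟨h1, h2⟩; exact ⟨h1.symm, h2.symm⟩
  loopless := by constructor; rintro u ⟨h, _⟩; exact h rfl

lemma card_le_alpha [Fintype V] (G : SimpleGraph V) {S : Finset V} (h : IsStable G S) :
    S.card ≤ alpha G :=
  Finset.le_sup (f := Finset.card) (by
    simp only [Finset.mem_filter, Finset.mem_powerset]
    exact ⟨Finset.subset_univ S, h⟩)

lemma exists_max_stable [Fintype V] (G : SimpleGraph V) :
    ∃ S : Finset V, IsStable G S ∧ S.card = alpha G := by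
  obtain ⟨S, hS, hcard⟩ := Finset.exists_mem_eq_sup
    (Finset.univ.powerset.filter (fun S => IsStable G S))
    ⟨∅, by simp [IsStable]⟩ Finset.card
  simp only [Finset.mem_filter, Finset.mem_powerset] at hS
  exact ⟨S, hS.2, hcard.symm⟩

lemma isStable_of_square {G : SimpleGraph V} {S : Finset V}
    (h : IsStable (square G) S) : IsStable G S := by
  intro a ha b hb hab
  exact h ha hb ⟨G.ne_of_adj hab, Or.inl hab⟩

/-- G is square-stable iff there is a maximum stable set S₀ such that every stable set A
disjoint from S₀ can be uniquely matched into S₀. -/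
theorem stmt8 [Fintype V] (G : SimpleGraph V) :
    SquareStable G ↔
      ∃ S₀ : Finset V, IsMaxStable G S₀ ∧
        ∀ A : Finset V, IsStable G A → Disjoint A S₀ →
          ∃ f : V → V, MatchedInto G A S₀ f ∧
            ∀ g : V → V, MatchedInto G A S₀ g → ∀ a ∈ A, g a = f a := by
  classical
  have hle : alpha (square G) ≤ alpha G := by
    obtain ⟨S, hS, hcard⟩ := exists_max_stable (square G)
    calc alpha (square G) = S.card := hcard.symm
      _ ≤ alpha G := card_le_alpha G (isStable_of_square hS)
  constructor
  · intro hsq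
    obtain ⟨S₀, hS₀, hcard⟩ := exists_max_stable (square G)
    have hstG : IsStable G S₀ := isStable_of_square hS₀
    have hcardG : S₀.card = alpha G := by rw [hcard, ← hsq]
    have uniq : ∀ a : V, ∀ s ∈ S₀, ∀ t ∈ S₀, G.Adj a s → G.Adj a t → s = t := by
      intro a s hs t ht has hat
      by_contra hne
      exact hS₀ hs ht ⟨hne, Or.inr ⟨a, has.symm, hat⟩⟩
    refine ⟨S₀, ⟨hstG, hcardG⟩, ?_⟩
    intro A hA hdis
    have hex : ∀ a ∈ A, ∃ s ∈ S₀, G.Adj a s := by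
      intro a ha
      by_contra h
      push_neg at h
      have hnotin : a ∉ S₀ := Finset.disjoint_left.mp hdis ha
      have hst : IsStable G (insert a S₀) := by
        intro x hx y hy hxy
        rcases Finset.mem_insert.mp hx with h1 | hx2
        · subst h1
          rcases Finset.mem_insert.mp hy with h2 | hy2
          · subst h2; exact G.loopless.irrefl _ hxy
          · exact h y hy2 hxy
        · rcases Finset.mem_insert.mp hy with h2 | hy2
          · subst h2; exact h x hx2 hxy.symm
          · exact hstG hx2 hy2 hxy
      have := card_le_alpha G hst
      rw [Finset.card_insert_of_notMem hnotin, hcardG] at this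
      omega
    set f : V → V := fun a => if h : ∃ s ∈ S₀, G.Adj a s then h.choose else a with hf
    have hfspec : ∀ a ∈ A, f a ∈ S₀ ∧ G.Adj a (f a) := by
      intro a ha
      have h := hex a ha
      simp only [hf, dif_pos h]
      exact ⟨h.choose_spec.1, h.choose_spec.2⟩
    have hfinj : ∀ a ∈ A, ∀ b ∈ A, f a = f b → a = b := by
      intro a ha b hb hfab
      by_contra hab
      obtain ⟨hfs, hfa⟩ := hfspec a ha
      obtain ⟨hfs', hfb⟩ := hfspec b hb
      set s := f a with hs
      have haonly : ∀ t ∈ S₀.erase s, ¬ G.Adj a t := by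
        intro t ht hadj
        have := uniq a s hfs t (Finset.mem_of_mem_erase ht) hfa hadj
        exact (Finset.ne_of_mem_erase ht) this.symm
      have hbonly : ∀ t ∈ S₀.erase s, ¬ G.Adj b t := by
        intro t ht hadj
        have := uniq b (f b) hfs' t (Finset.mem_of_mem_erase ht) hfb hadj
        rw [← hfab] at this
        exact (Finset.ne_of_mem_erase ht) this.symm
      set T := insert a (insert b (S₀.erase s)) with hT
      have hstT : IsStable G T := by
        intro x hx y hy hxy
        simp only [hT, Finset.mem_insert] at hx hy
        rcases hx with h1 | h1 | hx2
        · subst h1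
          rcases hy with h2 | h2 | hy2
          · subst h2; exact G.loopless.irrefl _ hxy
          · subst h2; exact hA ha hb hxy
          · exact haonly y hy2 hxy
        · subst h1
          rcases hy with h2 | h2 | hy2
          · subst h2; exact hA hb ha hxy
          · subst h2; exact G.loopless.irrefl _ hxy
          · exact hbonly y hy2 hxy
        · rcases hy with h2 | h2 | hy2
          · subst h2; exact haonly x hx2 hxy.symm
          · subst h2; exact hbonly x hx2 hxy.symm
          · exact hstG (Finset.mem_of_mem_erase hx2) (Finset.mem_of_mem_erase hy2) hxy
      have haS : a ∉ S₀ := Finset.disjoint_left.mp hdis ha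
      have hbS : b ∉ S₀ := Finset.disjoint_left.mp hdis hb
      have hbnot : b ∉ S₀.erase s := fun h => hbS (Finset.mem_of_mem_erase h)
      have hanot : a ∉ insert b (S₀.erase s) := by
        simp only [Finset.mem_insert]
        rintro (rfl | h)
        · exact hab rfl
        · exact haS (Finset.mem_of_mem_erase h)
      have halpha1 : 1 ≤ alpha G := by
        rw [← hcardG]
        exact Finset.card_pos.mpr ⟨s, hfs⟩
      have hcardT : T.card = alpha G + 1 := by
        rw [hT, Finset.card_insert_of_notMem hanot, Finset.card_insert_of_notMem hbnot,
          Finset.card_erase_of_mem hfs, hcardG]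
        omega
      have := card_le_alpha G hstT
      omega
    refine ⟨f, ⟨hfspec, hfinj⟩, ?_⟩
    intro g hg a ha
    obtain ⟨hgs, hga⟩ := hg.1 a ha
    exact uniq a (g a) hgs (f a) (hfspec a ha).1 hga (hfspec a ha).2
  · rintro ⟨S₀, ⟨hst, hcard⟩, hmatch⟩
    have hsqst : IsStable (square G) S₀ := by
      intro u hu v hv huv
      obtain ⟨hne, hadj | ⟨w, hw1, hw2⟩⟩ := huv
      · exact hst hu hv hadj
      · have hwS : w ∉ S₀ := fun h => hst hu h hw1
        have hAst : IsStable G {w} := by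
          intro x hx y hy hxy
          simp only [Finset.mem_singleton] at hx hy
          subst hx; subst hy
          exact G.loopless.irrefl _ hxy
        have hdis : Disjoint ({w} : Finset V) S₀ := by
          simp [Finset.disjoint_left, hwS]
        obtain ⟨f, hfm, huniq⟩ := hmatch {w} hAst hdis
        have h1 : (fun _ => u) w = f w := huniq (fun _ => u)
          ⟨fun a ha => by
            simp only [Finset.mem_singleton] at ha; subst ha; exact ⟨hu, hw1.symm⟩,
           fun a ha b hb _ => by
            simp only [Finset.mem_singleton] at ha hb; rw [ha, hb]⟩
          w (Finset.mem_singleton_self w)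
        have h2 : (fun _ => v) w = f w := huniq (fun _ => v)
          ⟨fun a ha => by
            simp only [Finset.mem_singleton] at ha; subst ha; exact ⟨hv, hw2⟩,
           fun a ha b hb _ => by
            simp only [Finset.mem_singleton] at ha hb; rw [ha, hb]⟩
          w (Finset.mem_singleton_self w)
        exact hne (h1.trans h2.symm)
    have hge : alpha G ≤ alpha (square G) := by
      rw [← hcard]
      exact card_le_alpha (square G) hsqst
    exact le_antisymm hge hle
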